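/- Let g be a finite-dimensional semisimple real Lie algebra. Then the only Poisson structure on g is trivial; that is, if ⋆ : g × g → g is a commutative, associative product satisfying [x, y⋆z] = [x,y]⋆z + y⋆[x,z] for all x,y,z ∈ g, then x ⋆ y = 0 for all x, y ∈ g. -/

import Mathlib

open LinearMap Module Polynomial

universe u

/-- An endomorphism of a finite-dimensional real vector space all of whose positive powers have
zero trace is nilpotent. -/
private lemma aux_nilpotent_of_trace_pow :
    ∀ (n : ℕ) (V : Type u) (_ : AddCommGroup V), ∀ (_ : Module ℝ V) (_ : FiniteDimensional ℝ V),
    finrank ℝ V = n → ∀ f : Module.End ℝ V,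
    (∀ k : ℕ, trace ℝ V (f ^ (k + 1)) = 0) → IsNilpotent f := by
  intro n
  induction n using Nat.strong_induction_on with
  | _ n IH =>
    intro V _ _ _ hdim f htr
    by_cases hinj : Function.Injective f
    · -- injective case: charpoly argument shows `finrank = 0`
      have hsurj : Function.Surjective f := (LinearMap.injective_iff_surjective).mp hinj
      set e := LinearEquiv.ofBijective f ⟨hinj, hsurj⟩ with he
      have hdet : LinearMap.det f ≠ 0 := by
        have := e.isUnit_det'
        have hcoe : (e : V →ₗ[ℝ] V) = f := rfl
        rw [hcoe] at this
        exact this.ne_zero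
      have hc0 : f.charpoly.coeff 0 ≠ 0 := by
        intro h0
        have hb := Matrix.det_eq_sign_charpoly_coeff
          (LinearMap.toMatrix (Module.Free.chooseBasis ℝ V) (Module.Free.chooseBasis ℝ V) f)
        rw [LinearMap.det_toMatrix] at hb
        apply hdet
        rw [hb]
        have h2 : (LinearMap.toMatrix (Module.Free.chooseBasis ℝ V)
            (Module.Free.chooseBasis ℝ V) f).charpoly = f.charpoly := rfl
        rw [h2, h0, mul_zero]
      have hCH : trace ℝ V (aeval f f.charpoly) = 0 := by
        rw [f.aeval_self_charpoly]; simp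
      rw [aeval_eq_sum_range, map_sum] at hCH
      have hterm : ∀ i ∈ Finset.range (f.charpoly.natDegree + 1), i ≠ 0 →
          trace ℝ V (f.charpoly.coeff i • f ^ i) = 0 := by
        intro i _ hi
        obtain ⟨k, rfl⟩ := Nat.exists_eq_succ_of_ne_zero hi
        rw [map_smul, htr k, smul_zero]
      rw [Finset.sum_eq_single_of_mem 0 (Finset.mem_range.mpr (Nat.succ_pos _)) hterm] at hCH
      rw [pow_zero, map_smul, trace_one, smul_eq_mul] at hCH
      have hfr : (finrank ℝ V : ℝ) = 0 := by
        rcases mul_eq_zero.mp hCH with h | h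
        · exact absurd h hc0
        · exact h
      have : finrank ℝ V = 0 := by exact_mod_cast hfr
      have : Subsingleton V := (finrank_zero_iff (R := ℝ) (M := V)).mp this
      exact ⟨1, by ext v; simp [Subsingleton.elim (f v) 0]⟩
    · -- non-injective case: restrict to the range and induct
      set W := LinearMap.range f with hW
      have hWinv : ∀ x ∈ W, f x ∈ W := fun x _ => LinearMap.mem_range_self f x
      set p : V →ₗ[ℝ] W := f.rangeRestrict with hp
      set ι : W →ₗ[ℝ] V := W.subtype with hι
      have hfact : ι ∘ₗ p = f := LinearMap.subtype_comp_codRestrict _ _ _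
      have hpow : ∀ k : ℕ, f ^ (k + 1) = ι ∘ₗ (((p ∘ₗ ι) ^ k) ∘ₗ p) := by
        intro k
        induction k with
        | zero =>
          rw [zero_add, pow_one, pow_zero, Module.End.one_eq_id, LinearMap.id_comp]
          exact hfact.symm
        | succ k ih =>
          have h1 : f ^ (k + 1 + 1) = f ∘ₗ f ^ (k + 1) := by
            rw [pow_succ']; rfl
          have h2 : ((p ∘ₗ ι) ^ (k + 1)) = (p ∘ₗ ι) ∘ₗ ((p ∘ₗ ι) ^ k) := by
            rw [pow_succ']; rfl
          rw [h1, ih, ← hfact, h2]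
          simp only [LinearMap.comp_assoc]
      set f' : Module.End ℝ W := p ∘ₗ ι with hf'
      have htr' : ∀ k : ℕ, trace ℝ W (f' ^ (k + 1)) = 0 := by
        intro k
        have h1 : trace ℝ V (f ^ (k + 1)) = 0 := htr k
        rw [hpow k] at h1
        rw [trace_comp_comm'] at h1
        have h2 : ((((p ∘ₗ ι) ^ k) ∘ₗ p) ∘ₗ ι) = f' ^ (k + 1) := by
          rw [pow_succ, Module.End.mul_eq_comp]
          simp only [LinearMap.comp_assoc]; rfl
        rwa [h2] at h1
      have hker : LinearMap.ker f ≠ ⊥ := by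
        intro h
        exact hinj (LinearMap.ker_eq_bot.mp h)
      have hlt : finrank ℝ W < n := by
        have hrn := LinearMap.finrank_range_add_finrank_ker f
        have hpos : 0 < finrank ℝ (LinearMap.ker f) :=
          Module.finrank_pos_iff.mpr (Submodule.nontrivial_iff_ne_bot.mpr hker)
        rw [hW]
        omega
      obtain ⟨m, hm⟩ := IH (finrank ℝ W) hlt W inferInstance inferInstance inferInstance rfl f' htr'
      refine ⟨m + 1, ?_⟩
      have : (f ^ (m + 1) : Module.End ℝ V) = ι ∘ₗ ((f' ^ m) ∘ₗ p) := hpow m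
      rw [this, hm]
      simp

section setup

variable {g : Type*} [LieRing g] [LieAlgebra ℝ g] [FiniteDimensional ℝ g]
  [LieAlgebra.IsSemisimple ℝ g]
  (mul : g →ₗ[ℝ] g →ₗ[ℝ] g)
  (hcomm : ∀ x y : g, mul x y = mul y x)
  (hassoc : ∀ x y z : g, mul (mul x y) z = mul x (mul y z))
  (hinv : ∀ x y z : g, ⁅x, mul y z⁆ = mul ⁅x, y⁆ z + mul y ⁅x, z⁆)

include hinv in
/-- The commutation relation `[ad x, L_a] = L_{[x,a]}`. -/
private lemma aux_comm (x a : g) :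
    (LieAlgebra.ad ℝ g x) * (mul a : Module.End ℝ g)
      - (mul a : Module.End ℝ g) * (LieAlgebra.ad ℝ g x) = mul ⁅x, a⁆ := by
  ext y
  simp only [LinearMap.sub_apply, Module.End.mul_apply, LieAlgebra.ad_apply]
  rw [hinv x a y]
  abel

include hassoc in
/-- `L_{a⋆b} = L_a * L_b`. -/
private lemma aux_mul (a b : g) :
    (mul (mul a b) : Module.End ℝ g) = (mul a : Module.End ℝ g) * mul b := by
  ext y
  simp only [Module.End.mul_apply]
  exact hassoc a b y

/-- Semisimple Lie algebras are perfect. -/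
private lemma aux_perfect : (⊤ : LieIdeal ℝ g) ≤ ⁅(⊤ : LieIdeal ℝ g), (⊤ : LieIdeal ℝ g)⁆ := by
  conv_lhs => rw [← LieAlgebra.IsSemisimple.sSup_atoms_eq_top (R := ℝ) (L := g)]
  apply sSup_le
  intro I hI
  have h1 : ⁅I, I⁆ = I :=
    lie_eq_self_of_isAtom_of_nonabelian I hI (LieAlgebra.IsSemisimple.non_abelian_of_isAtom I hI)
  calc I = ⁅I, I⁆ := h1.symm
    _ ≤ ⁅(⊤ : LieIdeal ℝ g), (⊤ : LieIdeal ℝ g)⁆ := LieSubmodule.mono_lie le_top le_top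

include hinv in
/-- Every left multiplication operator has zero trace. -/
private lemma aux_trace_zero (a : g) : trace ℝ g (mul a : Module.End ℝ g) = 0 := by
  have ha : a ∈ (⁅(⊤ : LieIdeal ℝ g), (⊤ : LieIdeal ℝ g)⁆ : LieIdeal ℝ g) :=
    aux_perfect (LieSubmodule.mem_top a)
  rw [← LieSubmodule.mem_toSubmodule, LieSubmodule.lieIdeal_oper_eq_linear_span'] at ha
  induction ha using Submodule.span_induction with
  | mem z hz =>
    obtain ⟨x, -, y, -, rfl⟩ := hz
    have h := aux_comm mul hinv x y
    rw [← h, map_sub, LinearMap.trace_mul_comm, sub_self]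
  | zero => simp
  | add u v _ _ hu hv => rw [map_add, map_add, hu, hv, add_zero]
  | smul t u _ hu => rw [map_smul, map_smul, hu, smul_zero]

include hcomm hassoc hinv in
/-- Every left multiplication operator is nilpotent. -/
private lemma aux_L_nilpotent (a : g) : IsNilpotent (mul a : Module.End ℝ g) := by
  -- powers of `a` under `mul`
  let apow : ℕ → g := fun k => Nat.rec a (fun _ w => mul a w) k
  have hLpow : ∀ k : ℕ, (mul a : Module.End ℝ g) ^ (k + 1) = mul (apow k) := by
    intro k
    induction k with
    | zero => simp [apow, pow_one]
    | succ k ih =>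
      have h1 : (mul a : Module.End ℝ g) ^ (k + 2)
          = (mul a : Module.End ℝ g) * (mul a : Module.End ℝ g) ^ (k + 1) := by
        rw [pow_succ']
      rw [h1, ih, ← aux_mul mul hassoc]
  apply aux_nilpotent_of_trace_pow (finrank ℝ g) g inferInstance inferInstance inferInstance rfl
  intro k
  rw [hLpow k]
  exact aux_trace_zero mul hinv (apow k)

end setup

attribute [local instance] LieRing.ofAssociativeRing

/-- A finite-dimensional semisimple real Lie algebra admits only the
trivial Poisson structure: any commutative, associative, ad-invariant product is zero. -/
theorem stmt_4 (g : Type*) [LieRing g] [LieAlgebra ℝ g] [FiniteDimensional ℝ g]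
    [LieAlgebra.IsSemisimple ℝ g]
    (mul : g →ₗ[ℝ] g →ₗ[ℝ] g)
    (hcomm : ∀ x y : g, mul x y = mul y x)
    (hassoc : ∀ x y z : g, mul (mul x y) z = mul x (mul y z))
    (hinv : ∀ x y z : g, ⁅x, mul y z⁆ = mul ⁅x, y⁆ z + mul y ⁅x, z⁆) :
    ∀ x y : g, mul x y = 0 := by
  classical
  -- the abelian Lie subalgebra of `End g` given by left multiplications
  let K : LieSubalgebra ℝ (Module.End ℝ g) :=
    { toSubmodule := LinearMap.range (mul : g →ₗ[ℝ] Module.End ℝ g)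
      lie_mem' := by
        rintro x y ⟨a, rfl⟩ ⟨b, rfl⟩
        have : ⁅(mul a : Module.End ℝ g), (mul b : Module.End ℝ g)⁆ = 0 := by
          rw [LieRing.of_associative_ring_bracket, ← aux_mul mul hassoc,
            ← aux_mul mul hassoc, hcomm a b, sub_self]
        rw [this]
        exact ⟨0, map_zero _⟩ }
  have hKmem : ∀ a : g, (mul a : Module.End ℝ g) ∈ K := fun a => ⟨a, rfl⟩
  -- Engel's theorem: `g` is a nilpotent module over `K`
  have hnilp : LieModule.IsNilpotent K g := by
    rw [LieModule.isNilpotent_iff_forall' (R := ℝ)]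
    rintro ⟨x, a, rfl⟩
    have h : LieModule.toEnd ℝ K g ⟨mul a, hKmem a⟩ = (mul a : Module.End ℝ g) := by
      ext m
      simp only [LieModule.toEnd_apply_apply, LieSubalgebra.coe_bracket_of_module,
        Module.End.lie_apply]
    rw [h]
    exact aux_L_nilpotent mul hcomm hassoc hinv a
  obtain ⟨N, hN⟩ := (LieModule.isNilpotent_iff ℝ K g).mp hnilp
  -- the chain of product submodules
  let P : ℕ → Submodule ℝ g := fun k =>
    Nat.rec ⊤ (fun _ Q => Submodule.span ℝ {z | ∃ a : g, ∃ w ∈ Q, z = mul a w}) k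
  have hPsucc : ∀ k, P (k + 1) = Submodule.span ℝ {z | ∃ a : g, ∃ w ∈ P k, z = mul a w} :=
    fun k => rfl
  have hPmem : ∀ (k) (a : g) (w), w ∈ P k → mul a w ∈ P (k + 1) := by
    intro k a w hw
    rw [hPsucc]
    exact Submodule.subset_span ⟨a, w, hw, rfl⟩
  -- the chain is decreasing
  have hPmono : ∀ k, P (k + 1) ≤ P k := by
    intro k
    induction k with
    | zero => exact le_top
    | succ k ih =>
      rw [hPsucc]
      apply Submodule.span_le.mpr
      rintro z ⟨a, w, hw, rfl⟩
      exact hPmem k a w (ih hw)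
  -- bracket stability
  have hPlie : ∀ (k) (x : g) (w), w ∈ P k → ⁅x, w⁆ ∈ P k := by
    intro k
    induction k with
    | zero => intro x w _; exact Submodule.mem_top
    | succ k ih =>
      intro x w hw
      rw [hPsucc] at hw ⊢
      induction hw using Submodule.span_induction with
      | mem z hz =>
        obtain ⟨a, v, hv, rfl⟩ := hz
        rw [hinv x a v]
        exact add_mem (Submodule.subset_span ⟨⁅x, a⁆, v, hv, rfl⟩)
          (Submodule.subset_span ⟨a, ⁅x, v⁆, ih x v hv, rfl⟩)
      | zero => simp
      | add u v _ _ hu hv => rw [lie_add]; exact add_mem hu hv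
      | smul t u _ hu => rw [lie_smul]; exact Submodule.smul_mem _ t hu
  -- deep products
  have hPmul : ∀ (i j) (u w : g), u ∈ P i → w ∈ P j → mul u w ∈ P (i + j + 1) := by
    intro i
    induction i with
    | zero =>
      intro j u w _ hw
      have := hPmem j u w hw
      simpa using this
    | succ i ih =>
      intro j u w hu hw
      rw [hPsucc] at hu
      induction hu using Submodule.span_induction with
      | mem z hz =>
        obtain ⟨a, v, hv, rfl⟩ := hz
        rw [hassoc a v w]
        have h1 : mul v w ∈ P (i + j + 1) := ih j v w hv hw
        have := hPmem (i + j + 1) a _ h1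
        have heq : i + 1 + j + 1 = i + j + 1 + 1 := by omega
        rwa [heq]
      | zero => simp
      | add u₁ u₂ _ _ h1 h2 =>
        rw [map_add, LinearMap.add_apply]; exact add_mem h1 h2
      | smul t u₁ _ h1 =>
        rw [map_smul, LinearMap.smul_apply]; exact Submodule.smul_mem _ t h1
  -- brackets of products with deep products descend deeper
  have hPlie2 : ∀ (j) (u w : g), u ∈ P 1 → w ∈ P j → ⁅u, w⁆ ∈ P (j + 1) := by
    intro j
    induction j with
    | zero =>
      intro u w hu _
      rw [← lie_skew]
      exact Submodule.neg_mem _ (hPlie 1 w u hu)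
    | succ j ih =>
      intro u w hu hw
      rw [hPsucc] at hw
      induction hw using Submodule.span_induction with
      | mem z hz =>
        obtain ⟨a, v, hv, rfl⟩ := hz
        rw [hinv u a v]
        apply add_mem
        · have h1 : ⁅u, a⁆ ∈ P 1 := by
            rw [← lie_skew]
            exact Submodule.neg_mem _ (hPlie 1 a u hu)
          have := hPmul 1 j ⁅u, a⁆ v h1 hv
          have heq : 1 + j + 1 = j + 1 + 1 := by omega
          rwa [heq] at this
        · exact hPmem (j + 1) a _ (ih u v hu hv)
      | zero => simp
      | add w₁ w₂ _ _ h1 h2 => rw [lie_add]; exact add_mem h1 h2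
      | smul t w₁ _ h1 => rw [lie_smul]; exact Submodule.smul_mem _ t h1
  -- the chain is contained in the lower central series of `g` over `K`
  have hPle : ∀ k, P k ≤ (LieModule.lowerCentralSeries ℝ K g k : Submodule ℝ g) := by
    intro k
    induction k with
    | zero =>
      rw [LieModule.lowerCentralSeries_zero]
      exact le_top
    | succ k ih =>
      rw [hPsucc]
      apply Submodule.span_le.mpr
      rintro z ⟨a, w, hw, rfl⟩
      have h1 : mul a w = ⁅(⟨mul a, hKmem a⟩ : K), w⁆ := rfl
      rw [SetLike.mem_coe, LieSubmodule.mem_toSubmodule, h1,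
        LieModule.lowerCentralSeries_succ]
      exact LieSubmodule.lie_mem_lie (LieSubmodule.mem_top _)
        ((LieSubmodule.mem_toSubmodule _).mp (ih hw))
  -- the chain terminates
  have hPbot : P (N + 1) = ⊥ := by
    apply le_antisymm _ bot_le
    have h1 := hPle (N + 1)
    have h2 : LieModule.lowerCentralSeries ℝ K g (N + 1) = ⊥ := by
      have : LieModule.lowerCentralSeries ℝ K g (N + 1)
          ≤ LieModule.lowerCentralSeries ℝ K g N :=
        LieModule.antitone_lowerCentralSeries ℝ K g (Nat.le_succ N)
      rw [hN] at this
      exact le_bot_iff.mp this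
    rw [h2] at h1
    simpa using h1
  have hle1 : ∀ k, P (k + 1) ≤ P 1 := by
    intro k
    induction k with
    | zero => exact le_refl _
    | succ k ih => exact le_trans (hPmono (k + 1)) ih
  -- each `P (k+1)` with `P (k+2) = ⊥` is an abelian Lie ideal, hence `⊥`
  have hstep : ∀ k, P (k + 2) = ⊥ → P (k + 1) = ⊥ := by
    intro k hk
    let I : LieIdeal ℝ g :=
      { toSubmodule := P (k + 1)
        lie_mem := fun {x m} hm => hPlie (k + 1) x m hm }
    have hIab : IsLieAbelian I := by
      constructor
      intro x y
      have hx : (x : g) ∈ P 1 := hle1 k x.2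
      have h2 : ⁅(x : g), (y : g)⁆ ∈ P (k + 2) := hPlie2 (k + 1) x y hx y.2
      rw [hk] at h2
      have h3 : ⁅(x : g), (y : g)⁆ = 0 := by simpa using h2
      ext
      simpa using h3
    have : I = ⊥ := LieAlgebra.HasTrivialRadical.eq_bot_of_isSolvable I
    have hcoe : P (k + 1) = (I : Submodule ℝ g) := rfl
    rw [hcoe, this]
    rfl
  -- descend to `P 1 = ⊥`
  have hdescend : ∀ j, P (j + 1) = ⊥ → P 1 = ⊥ := by
    intro j
    induction j with
    | zero => exact fun h => h
    | succ j ih => exact fun h => ih (hstep j h)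
  have hP1 : P 1 = ⊥ := hdescend N hPbot
  intro x y
  have : mul x y ∈ P 1 := hPmem 0 x y Submodule.mem_top
  rw [hP1] at this
  simpa using this
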